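/- arXiv:1702.07219 — 2 statements merged into one kernel-verified Lean document; each statement's English description precedes it below -/
import Mathlib

section
/- Iterated potential growth for the ORBIT update: let π ≥ 1, ε ≥ 1, and let κ be a real number with κ ≥ 1. Let (q_j)_{j ∈ ℕ} be real numbers with 1 ≤ q_j ≤ κ for all j, and define z_0 = 0 and z_{j+1} = z_j·(1 + 1/(π·ε)) + 1/(π·q_j). Then for every natural number t, z_t ≥ (1/κ)·((1 + 1/(π·ε))^t − 1). -/
/-- Iterated potential growth for the ORBIT update. -/
theorem orbit_potential_growth (π ε κ : ℝ) (hπ : 1 ≤ π) (hε : 1 ≤ ε) (hκ : 1 ≤ κ)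
    (q : ℕ → ℝ) (hq1 : ∀ j, 1 ≤ q j) (hqκ : ∀ j, q j ≤ κ)
    (z : ℕ → ℝ) (hz0 : z 0 = 0)
    (hzrec : ∀ j, z (j + 1) = z j * (1 + 1 / (π * ε)) + 1 / (π * q j)) :
    ∀ t : ℕ, (1 / κ) * ((1 + 1 / (π * ε)) ^ t - 1) ≤ z t := by
  have hπ0 : (0:ℝ) < π := lt_of_lt_of_le one_pos hπ
  have hε0 : (0:ℝ) < ε := lt_of_lt_of_le one_pos hε
  have hκ0 : (0:ℝ) < κ := lt_of_lt_of_le one_pos hκ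
  have hr1 : (1:ℝ) ≤ 1 + 1 / (π * ε) := by
    have : (0:ℝ) < 1 / (π * ε) := by positivity
    linarith
  intro t
  induction t with
  | zero => simp [hz0]
  | succ t ih =>
    rw [hzrec]
    have hq0 : (0:ℝ) < q t := lt_of_lt_of_le one_pos (hq1 t)
    have h1 : 1 / (π * κ * ε) ≤ 1 / (π * q t) := by
      apply one_div_le_one_div_of_le (by positivity)
      calc π * q t ≤ π * κ := by nlinarith [hqκ t]
        _ ≤ π * κ * ε := by nlinarith [mul_pos hπ0 hκ0]
    have key : (1 / κ) * ((1 + 1 / (π * ε)) ^ (t+1) - 1)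
        ≤ (1 / κ) * ((1 + 1 / (π * ε)) ^ t - 1) * (1 + 1 / (π * ε)) + 1 / (π * q t) := by
      have : (1 / κ) * ((1 + 1 / (π * ε)) ^ (t+1) - 1)
          - (1 / κ) * ((1 + 1 / (π * ε)) ^ t - 1) * (1 + 1 / (π * ε))
          = 1 / (π * κ * ε) := by
        ring
      linarith
    have hmul : (1 / κ) * ((1 + 1 / (π * ε)) ^ t - 1) * (1 + 1 / (π * ε))
        ≤ z t * (1 + 1 / (π * ε)) :=
      mul_le_mul_of_nonneg_right ih (by linarith)
    linarith
end

section
/- Bound on the dual load of a partition (inequality (19) of the paper): let π ≥ 1 and ε ≥ 1 be real numbers, let κ be a real number with κ ≥ 1, and let S ≥ 0 be a real number. If (1/κ)·((1 + 1/(π·ε))^S − 1) ≤ 3 (real exponentiation), then S ≤ log(3·κ + 1)·(1 + π·ε), where log denotes the natural logarithm. In particular S ≤ π·C·ε·log κ for a suitable absolute constant C when κ ≥ 2. -/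
theorem aux1 (π ε κ S : ℝ) (hπ : 1 ≤ π) (hε : 1 ≤ ε) (hκ : 1 ≤ κ) (hS : 0 ≤ S)
    (h : (1 / κ) * ((1 + 1 / (π * ε)) ^ S - 1) ≤ 3) :
    S ≤ Real.log (3 * κ + 1) * (1 + π * ε) := by
  have hP : (1:ℝ) ≤ π * ε := by nlinarith
  have hP0 : (0:ℝ) < π * ε := by linarith
  have hκ0 : (0:ℝ) < κ := by linarith
  set x : ℝ := 1 / (π * ε) with hx
  have hx0 : 0 < x := by positivity
  have hb : (1:ℝ) < 1 + x := by linarith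
  -- (1+x)^S ≤ 3κ+1
  have h1 : (1 + x) ^ S ≤ 3 * κ + 1 := by
    rw [one_div, inv_mul_eq_div, div_le_iff₀ hκ0] at h
    linarith
  -- log bound
  have h2 : S * Real.log (1 + x) ≤ Real.log (3 * κ + 1) := by
    rw [← Real.log_rpow (by linarith : (0:ℝ) < 1 + x)]
    exact Real.log_le_log (by positivity) h1
  -- log(1+x) ≥ x/(1+x) = 1/(1+πε)
  have h3 : 1 / (1 + π * ε) ≤ Real.log (1 + x) := by
    have hlog : Real.log (1 / (1 + x)) ≤ 1 / (1 + x) - 1 :=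
      Real.log_le_sub_one_of_pos (by positivity)
    rw [Real.log_div one_ne_zero (by linarith), Real.log_one] at hlog
    have hx1 : x / (1 + x) ≤ Real.log (1 + x) := by
      have : 1 / (1 + x) - 1 = -(x / (1 + x)) := by field_simp; ring
      linarith [hlog, this ▸ hlog]
    have heq : x / (1 + x) = 1 / (1 + π * ε) := by
      rw [hx]; field_simp; ring
    linarith [heq ▸ hx1]
  have h4 : S * (1 / (1 + π * ε)) ≤ Real.log (3 * κ + 1) :=
    le_trans (by nlinarith [mul_le_mul_of_nonneg_left h3 hS]) h2
  have hd : (0:ℝ) < 1 + π * ε := by linarith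
  calc S = S * (1 / (1 + π * ε)) * (1 + π * ε) := by field_simp
    _ ≤ Real.log (3 * κ + 1) * (1 + π * ε) :=
        mul_le_mul_of_nonneg_right h4 (le_of_lt hd)

/-- Bound on the dual load of a partition (inequality (19)), together with the
derived `O(ε log κ)` bound for `κ ≥ 2` with an absolute constant `C`. -/
theorem orbit_dual_load_bound :
    (∀ π ε κ S : ℝ, 1 ≤ π → 1 ≤ ε → 1 ≤ κ → 0 ≤ S →
      (1 / κ) * ((1 + 1 / (π * ε)) ^ S - 1) ≤ 3 →
      S ≤ Real.log (3 * κ + 1) * (1 + π * ε)) ∧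
    (∃ C : ℝ, 0 < C ∧ ∀ π ε κ S : ℝ, 1 ≤ π → 1 ≤ ε → 2 ≤ κ → 0 ≤ S →
      (1 / κ) * ((1 + 1 / (π * ε)) ^ S - 1) ≤ 3 →
      S ≤ π * C * ε * Real.log κ) := by
  refine ⟨aux1, 6, by norm_num, ?_⟩
  intro π ε κ S hπ hε hκ hS h
  have h1 := aux1 π ε κ S hπ hε (by linarith) hS h
  have hκ0 : (0:ℝ) < κ := by linarith
  have hlogκ : 0 < Real.log κ := Real.log_pos (by linarith)
  have hcube : 3 * κ + 1 ≤ κ ^ 3 := by nlinarith [mul_nonneg (by linarith : (0:ℝ) ≤ κ - 2) (sq_nonneg κ), sq_nonneg (κ - 2)]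
  have h2 : Real.log (3 * κ + 1) ≤ 3 * Real.log κ := by
    calc Real.log (3 * κ + 1) ≤ Real.log (κ ^ 3) := Real.log_le_log (by linarith) hcube
      _ = 3 * Real.log κ := by rw [Real.log_pow]; push_cast; ring
  have hP : (1:ℝ) ≤ π * ε := by nlinarith
  have h3 : 1 + π * ε ≤ 2 * (π * ε) := by linarith
  have : Real.log (3 * κ + 1) * (1 + π * ε) ≤ (3 * Real.log κ) * (2 * (π * ε)) := by
    apply mul_le_mul h2 h3 (by linarith) (by positivity)
  calc S ≤ Real.log (3 * κ + 1) * (1 + π * ε) := h1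
    _ ≤ (3 * Real.log κ) * (2 * (π * ε)) := this
    _ = π * 6 * ε * Real.log κ := by ring
end
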